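/- Let F : ℝ → ℝ be a nonnegative function with F(x) = 0 for |x| ≥ 1 and Σ_{n∈ℤ} F(x+n) = 1 for every real x. Let Δ > 0 and let X_1,…,X_d, Y_1,…,Y_d be Hermitian k×k complex matrices with ‖X_i‖ ≤ 1 and ‖Y_i‖ ≤ 1 for all i. For tuples of integers m = (m_1,…,m_d), n = (n_1,…,n_d) with |m_i| ≤ ⌈1/Δ⌉ and |n_i| ≤ ⌈1/Δ⌉, define A_{m,n} = F(X_1/Δ + m_1)^{1/2} ⋯ F(X_d/Δ + m_d)^{1/2} · F(Y_1/Δ + n_1)^{1/2} ⋯ F(Y_d/Δ + n_d)^{1/2} (ordered product, using the Hermitian functional calculus) and E_{m,n} = A_{m,n} A_{m,n}†. Then each E_{m,n} is positive semidefinite and Σ_{m,n} E_{m,n} = I, i.e. the family {E_{m,n}} is a POVM. -/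

import Mathlib

open scoped Matrix ComplexOrder

/-- The `ℓ²` operator norm of a complex matrix. -/
noncomputable def opNorm {k : ℕ} (A : Matrix (Fin k) (Fin k) ℂ) : ℝ :=
  ‖Matrix.toEuclideanCLM (𝕜 := ℂ) A‖

/-- Functional calculus for a Hermitian matrix: apply `g : ℝ → ℝ` to each eigenvalue in a
spectral decomposition. -/
noncomputable def hermApply {k : ℕ} (g : ℝ → ℝ) (X : Matrix (Fin k) (Fin k) ℂ)
    (hX : X.IsHermitian) : Matrix (Fin k) (Fin k) ℂ :=
  (hX.eigenvectorUnitary : Matrix (Fin k) (Fin k) ℂ) *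
    Matrix.diagonal (fun i => (g (hX.eigenvalues i) : ℂ)) *
    star (hX.eigenvectorUnitary : Matrix (Fin k) (Fin k) ℂ)

/-- The (ordered) product
`A_{m,n} = F(X_1/Δ + m_1)^{1/2} ⋯ F(X_d/Δ + m_d)^{1/2} F(Y_1/Δ + n_1)^{1/2} ⋯ F(Y_d/Δ + n_d)^{1/2}`. -/
noncomputable def povmA {k d : ℕ} (F : ℝ → ℝ) (Δ : ℝ)
    (X Y : Fin d → Matrix (Fin k) (Fin k) ℂ)
    (hX : ∀ i, (X i).IsHermitian) (hY : ∀ i, (Y i).IsHermitian)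
    (m n : Fin d → ℤ) : Matrix (Fin k) (Fin k) ℂ :=
  (List.ofFn fun j => hermApply (fun x => Real.sqrt (F (x / Δ + m j))) (X j) (hX j)).prod *
    (List.ofFn fun j => hermApply (fun x => Real.sqrt (F (x / Δ + n j))) (Y j) (hY j)).prod

lemma hermApply_mul {k : ℕ} (g h : ℝ → ℝ) (X : Matrix (Fin k) (Fin k) ℂ)
    (hX : X.IsHermitian) :
    hermApply g X hX * hermApply h X hX = hermApply (fun x => g x * h x) X hX := by
  unfold hermApply
  set U : Matrix (Fin k) (Fin k) ℂ := (hX.eigenvectorUnitary : Matrix (Fin k) (Fin k) ℂ)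
  have h1 : star U * U = 1 := Unitary.coe_star_mul_self _
  simp only [mul_assoc]
  rw [← mul_assoc (star U) U, h1, one_mul, ← mul_assoc (Matrix.diagonal _),
    Matrix.diagonal_mul_diagonal]
  push_cast
  ring_nf

lemma hermApply_isHermitian {k : ℕ} (g : ℝ → ℝ) (X : Matrix (Fin k) (Fin k) ℂ)
    (hX : X.IsHermitian) : (hermApply g X hX).IsHermitian := by
  set U : Matrix (Fin k) (Fin k) ℂ := (hX.eigenvectorUnitary : Matrix (Fin k) (Fin k) ℂ)
  set D : Matrix (Fin k) (Fin k) ℂ := Matrix.diagonal (fun i => (g (hX.eigenvalues i) : ℂ))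
  have hD : Dᴴ = D := by
    rw [Matrix.diagonal_conjTranspose]
    have : (star fun i => ((g (hX.eigenvalues i) : ℝ) : ℂ))
        = fun i => ((g (hX.eigenvalues i) : ℝ) : ℂ) := funext fun i => Complex.conj_ofReal _
    rw [this]
  show ((U * D) * star U)ᴴ = (U * D) * star U
  rw [Matrix.star_eq_conjTranspose, Matrix.conjTranspose_mul, Matrix.conjTranspose_mul,
    Matrix.conjTranspose_conjTranspose, hD, mul_assoc]

lemma hermApply_sum_eq_one {k : ℕ} {ι : Type*} (s : Finset ι) (g : ι → ℝ → ℝ)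
    (X : Matrix (Fin k) (Fin k) ℂ) (hX : X.IsHermitian)
    (hsum : ∀ i, ∑ m ∈ s, g m (hX.eigenvalues i) = 1) :
    ∑ m ∈ s, hermApply (g m) X hX = 1 := by
  unfold hermApply
  rw [← Finset.sum_mul, ← Finset.mul_sum]
  have hdsum : ∑ m ∈ s, Matrix.diagonal (fun i => (g m (hX.eigenvalues i) : ℂ))
      = (1 : Matrix (Fin k) (Fin k) ℂ) := by
    ext i j
    rw [Matrix.sum_apply]
    by_cases hij : i = j
    · subst hij
      simp only [Matrix.diagonal_apply_eq, Matrix.one_apply_eq, ← Complex.ofReal_sum, hsum]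
      norm_num
    · simp [Matrix.diagonal_apply_ne _ hij, Matrix.one_apply_ne hij]
  rw [hdsum, mul_one]
  exact Unitary.coe_mul_star_self _

lemma eigenvalue_abs_le {k : ℕ} (X : Matrix (Fin k) (Fin k) ℂ) (hX : X.IsHermitian)
    (h : opNorm X ≤ 1) (i : Fin k) : |hX.eigenvalues i| ≤ 1 := by
  have hmem : hX.eigenvalues i ∈ spectrum ℝ X := hX.eigenvalues_mem_spectrum_real i
  have hmemC : ((hX.eigenvalues i : ℝ) : ℂ) ∈ spectrum ℂ X := spectrum.algebraMap_mem ℂ hmem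
  rw [← AlgEquiv.spectrum_eq (Matrix.toEuclideanCLM (𝕜 := ℂ) (n := Fin k)) X] at hmemC
  haveI : Nontrivial (EuclideanSpace ℂ (Fin k)) := by
    refine ⟨⟨EuclideanSpace.single i 1, 0, ?_⟩⟩
    intro hcon
    have := congrFun (congrArg (fun v : EuclideanSpace ℂ (Fin k) => (v : Fin k → ℂ)) hcon) i
    simp at this
  have := spectrum.norm_le_norm_of_mem hmemC
  rw [Complex.norm_real] at this
  exact this.trans h

lemma scalar_sum_eq_one (F : ℝ → ℝ) (hFsupp : ∀ x : ℝ, 1 ≤ |x| → F x = 0)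
    (hFsum : ∀ x : ℝ, ∑' n : ℤ, F (x + n) = 1) (Δ : ℝ) (hΔ : 0 < Δ)
    (lam : ℝ) (hlam : |lam| ≤ 1) :
    ∑ m ∈ Finset.Icc (-(⌈1 / Δ⌉ : ℤ)) ⌈1 / Δ⌉, F (lam / Δ + m) = 1 := by
  have key : ∀ m ∉ Finset.Icc (-(⌈1 / Δ⌉ : ℤ)) ⌈1 / Δ⌉, F (lam / Δ + (m : ℤ)) = 0 := by
    intro m hm
    apply hFsupp
    have hc : (1 : ℝ) / Δ ≤ (⌈1 / Δ⌉ : ℤ) := Int.le_ceil _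
    have h1 : |lam / Δ| ≤ 1 / Δ := by
      rw [abs_div, abs_of_pos hΔ]
      gcongr
    have hm' : (⌈1 / Δ⌉ : ℤ) + 1 ≤ |m| := by
      simp only [Finset.mem_Icc, not_and_or, not_le] at hm
      have h2 := le_abs_self m
      have h3 := neg_abs_le m
      omega
    have hm'' : ((⌈1 / Δ⌉ : ℤ) : ℝ) + 1 ≤ |(m : ℝ)| := by
      rw [← Int.cast_abs]
      exact_mod_cast hm'
    have habs : |(m : ℝ)| ≤ |lam / Δ + m| + |lam / Δ| := by
      calc |(m : ℝ)| = |lam / Δ + m + -(lam / Δ)| := by ring_nf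
        _ ≤ |lam / Δ + m| + |-(lam / Δ)| := abs_add_le _ _
        _ = |lam / Δ + m| + |lam / Δ| := by rw [abs_neg]
    linarith
  rw [← tsum_eq_sum (L := SummationFilter.unconditional ℤ) key]
  exact hFsum (lam / Δ)

lemma sandwich {k : ℕ} (S : Finset ℤ) :
    ∀ (d : ℕ) (G : Fin d → ℤ → Matrix (Fin k) (Fin k) ℂ),
      (∀ j m, (G j m).IsHermitian) →
      (∀ j, ∑ m ∈ S, G j m * G j m = 1) →
      ∑ m ∈ Fintype.piFinset (fun _ : Fin d => S),
        (List.ofFn fun j => G j (m j)).prod * ((List.ofFn fun j => G j (m j)).prod)ᴴ = 1 := by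
  intro d
  induction d with
  | zero =>
    intro G hH hsum
    have huniv : Fintype.piFinset (fun _ : Fin 0 => S) = Finset.univ := by
      ext f
      simp [Fintype.mem_piFinset]
    rw [huniv, Fintype.sum_unique]
    simp
  | succ d ih =>
    intro G hH hsum
    have step : ∑ m ∈ Fintype.piFinset (fun _ : Fin (d + 1) => S),
          (List.ofFn fun j => G j (m j)).prod * ((List.ofFn fun j => G j (m j)).prod)ᴴ
        = ∑ p ∈ S ×ˢ Fintype.piFinset (fun _ : Fin d => S),
          (List.ofFn fun j => G j ((Fin.cons p.1 p.2 : Fin (d + 1) → ℤ) j)).prod *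
            ((List.ofFn fun j => G j ((Fin.cons p.1 p.2 : Fin (d + 1) → ℤ) j)).prod)ᴴ := by
      refine Finset.sum_nbij' (fun m => (m 0, Fin.tail m)) (fun p => (Fin.cons p.1 p.2 : Fin (d + 1) → ℤ))
        ?_ ?_ ?_ ?_ ?_
      · intro m hm
        simp only [Fintype.mem_piFinset] at hm
        simp only [Finset.mem_product, Fintype.mem_piFinset, Fin.tail]
        exact ⟨hm 0, fun j => hm _⟩
      · intro p hp
        simp only [Finset.mem_product, Fintype.mem_piFinset] at hp
        simp only [Fintype.mem_piFinset]
        intro j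
        refine Fin.cases ?_ ?_ j
        · simpa using hp.1
        · intro j'
          simpa using hp.2 j'
      · intro m _
        exact Fin.cons_self_tail m
      · intro p _
        simp
      · intro m _
        simp only [Fin.cons_self_tail]
    rw [step, Finset.sum_product]
    have hterm : ∀ (a : ℤ) (t : Fin d → ℤ),
        (List.ofFn fun j : Fin (d + 1) => G j ((Fin.cons a t : Fin (d + 1) → ℤ) j)).prod *
          ((List.ofFn fun j : Fin (d + 1) => G j ((Fin.cons a t : Fin (d + 1) → ℤ) j)).prod)ᴴ
        = G 0 a * ((List.ofFn fun j : Fin d => G j.succ (t j)).prod *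
            ((List.ofFn fun j : Fin d => G j.succ (t j)).prod)ᴴ) * G 0 a := by
      intro a t
      rw [List.ofFn_succ]
      simp only [Fin.cons_zero, Fin.cons_succ, List.prod_cons]
      rw [Matrix.conjTranspose_mul, (hH 0 a).eq]
      noncomm_ring
    simp only [hterm]
    have hin : ∀ a : ℤ, ∑ t ∈ Fintype.piFinset (fun _ : Fin d => S),
        G 0 a * ((List.ofFn fun j : Fin d => G j.succ (t j)).prod *
          ((List.ofFn fun j : Fin d => G j.succ (t j)).prod)ᴴ) * G 0 a
        = G 0 a * G 0 a := by
      intro a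
      rw [← Finset.sum_mul, ← Finset.mul_sum,
        ih (fun j m => G j.succ m) (fun j m => hH j.succ m) (fun j => hsum j.succ), mul_one]
    simp only [hin]
    exact hsum 0

theorem stmt7 {k d : ℕ} (F : ℝ → ℝ)
    (hF0 : ∀ x, 0 ≤ F x) (hFsupp : ∀ x : ℝ, 1 ≤ |x| → F x = 0)
    (hFsum : ∀ x : ℝ, ∑' n : ℤ, F (x + n) = 1)
    (Δ : ℝ) (hΔ : 0 < Δ)
    (X Y : Fin d → Matrix (Fin k) (Fin k) ℂ)
    (hX : ∀ i, (X i).IsHermitian) (hY : ∀ i, (Y i).IsHermitian)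
    (hXnorm : ∀ i, opNorm (X i) ≤ 1) (hYnorm : ∀ i, opNorm (Y i) ≤ 1) :
    (∀ m n : Fin d → ℤ,
      (m ∈ Fintype.piFinset fun _ : Fin d => Finset.Icc (-(⌈1 / Δ⌉ : ℤ)) ⌈1 / Δ⌉) →
      (n ∈ Fintype.piFinset fun _ : Fin d => Finset.Icc (-(⌈1 / Δ⌉ : ℤ)) ⌈1 / Δ⌉) →
      (povmA F Δ X Y hX hY m n * (povmA F Δ X Y hX hY m n)ᴴ).PosSemidef) ∧
    ∑ m ∈ Fintype.piFinset (fun _ : Fin d => Finset.Icc (-(⌈1 / Δ⌉ : ℤ)) ⌈1 / Δ⌉),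
      ∑ n ∈ Fintype.piFinset (fun _ : Fin d => Finset.Icc (-(⌈1 / Δ⌉ : ℤ)) ⌈1 / Δ⌉),
        povmA F Δ X Y hX hY m n * (povmA F Δ X Y hX hY m n)ᴴ = 1 := by
  set S : Finset ℤ := Finset.Icc (-(⌈1 / Δ⌉ : ℤ)) ⌈1 / Δ⌉ with hS
  refine ⟨fun m n _ _ => Matrix.posSemidef_self_mul_conjTranspose _, ?_⟩
  set G : Fin d → ℤ → Matrix (Fin k) (Fin k) ℂ :=
    fun j a => hermApply (fun x => Real.sqrt (F (x / Δ + a))) (X j) (hX j) with hG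
  set H : Fin d → ℤ → Matrix (Fin k) (Fin k) ℂ :=
    fun j a => hermApply (fun x => Real.sqrt (F (x / Δ + a))) (Y j) (hY j) with hH
  have hGherm : ∀ j a, (G j a).IsHermitian := fun j a => hermApply_isHermitian _ _ _
  have hHherm : ∀ j a, (H j a).IsHermitian := fun j a => hermApply_isHermitian _ _ _
  have hsq : ∀ (Z : Matrix (Fin k) (Fin k) ℂ) (hZ : Z.IsHermitian), opNorm Z ≤ 1 →
      ∑ a ∈ S, hermApply (fun x => Real.sqrt (F (x / Δ + a))) Z hZ *
        hermApply (fun x => Real.sqrt (F (x / Δ + a))) Z hZ = 1 := by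
    intro Z hZ hZn
    calc ∑ a ∈ S, hermApply (fun x => Real.sqrt (F (x / Δ + a))) Z hZ *
          hermApply (fun x => Real.sqrt (F (x / Δ + a))) Z hZ
        = ∑ a ∈ S, hermApply (fun x => Real.sqrt (F (x / Δ + a)) *
            Real.sqrt (F (x / Δ + a))) Z hZ :=
          Finset.sum_congr rfl fun a _ => hermApply_mul _ _ _ _
      _ = 1 := by
          refine hermApply_sum_eq_one S _ Z hZ fun i => ?_
          have heq : ∀ a : ℤ, Real.sqrt (F (hZ.eigenvalues i / Δ + a)) *
              Real.sqrt (F (hZ.eigenvalues i / Δ + a)) = F (hZ.eigenvalues i / Δ + a) :=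
            fun a => Real.mul_self_sqrt (hF0 _)
          simp only [heq]
          exact scalar_sum_eq_one F hFsupp hFsum Δ hΔ _ (eigenvalue_abs_le _ _ hZn i)
  have hGsum : ∀ j, ∑ a ∈ S, G j a * G j a = 1 := fun j => hsq (X j) (hX j) (hXnorm j)
  have hHsum : ∀ j, ∑ a ∈ S, H j a * H j a = 1 := fun j => hsq (Y j) (hY j) (hYnorm j)
  have hterm : ∀ m n : Fin d → ℤ, povmA F Δ X Y hX hY m n * (povmA F Δ X Y hX hY m n)ᴴ
      = (List.ofFn fun j => G j (m j)).prod *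
          ((List.ofFn fun j => H j (n j)).prod * ((List.ofFn fun j => H j (n j)).prod)ᴴ) *
          ((List.ofFn fun j => G j (m j)).prod)ᴴ := by
    intro m n
    show ((List.ofFn fun j => G j (m j)).prod * (List.ofFn fun j => H j (n j)).prod) *
        ((List.ofFn fun j => G j (m j)).prod * (List.ofFn fun j => H j (n j)).prod)ᴴ = _
    rw [Matrix.conjTranspose_mul]
    noncomm_ring
  simp only [hterm]
  have hin : ∀ m : Fin d → ℤ, ∑ n ∈ Fintype.piFinset (fun _ : Fin d => S),
      (List.ofFn fun j => G j (m j)).prod *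
        ((List.ofFn fun j => H j (n j)).prod * ((List.ofFn fun j => H j (n j)).prod)ᴴ) *
        ((List.ofFn fun j => G j (m j)).prod)ᴴ
      = (List.ofFn fun j => G j (m j)).prod * ((List.ofFn fun j => G j (m j)).prod)ᴴ := by
    intro m
    rw [← Finset.sum_mul, ← Finset.mul_sum, sandwich S d H hHherm hHsum, mul_one]
  simp only [hin]
  exact sandwich S d G hGherm hGsum
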